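/- Let c > 0 be fixed, let {x_n} ⊆ A, for each n let V_n be a subgradient tuple at x_n, and suppose that for every n the point x_{n+1} is a global minimiser of Q_c(·, x_n, V_n) over A. If the penalty function Φ_c is bounded below on A, then the sequence {Φ_c(x_n)} is non-increasing and |Φ_c(x_{n+1}) − Φ_c(x_n)| → 0 as n → ∞. -/
import Mathlib


open RealInnerProductSpace Finset Filter Topology

noncomputable section

/-- Euclidean space `ℝ^d`. -/
abbrev Euc (d : ℕ) := EuclideanSpace ℝ (Fin d)

/-- The (convex-analysis) subdifferential of `f` at `y`. -/
def subdiff {d : ℕ} (f : Euc d → ℝ) (y : Euc d) : Set (Euc d) :=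
  {v | ∀ x, f y + ⟪v, x - y⟫ ≤ f x}

/-- The normal cone to `A` at `x`. -/
def normalCone {d : ℕ} (A : Set (Euc d)) (x : Euc d) : Set (Euc d) :=
  {v | ∀ y ∈ A, ⟪v, y - x⟫ ≤ 0}

/-- A subgradient tuple `V = (v₀, vᵢ (i ∈ I), vⱼ, wⱼ (j ∈ E))` at the point `y`:
`v_k ∈ ∂h_k(y)` for `k ∈ {0} ∪ I ∪ E` and `w_j ∈ ∂g_j(y)` for `j ∈ E`. -/
structure SubgradTuple {d l p : ℕ} (h0 : Euc d → ℝ) (hI : Fin l → Euc d → ℝ)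
    (gE hE : Fin p → Euc d → ℝ) (y : Euc d) : Type where
  v0 : Euc d
  vI : Fin l → Euc d
  vE : Fin p → Euc d
  wE : Fin p → Euc d
  v0_mem : v0 ∈ subdiff h0 y
  vI_mem : ∀ i, vI i ∈ subdiff (hI i) y
  vE_mem : ∀ j, vE j ∈ subdiff (hE j) y
  wE_mem : ∀ j, wE j ∈ subdiff (gE j) y

variable {d l p : ℕ}

/-- The linearised infeasibility measure `Γ(x, y, V)`. -/
def Gam (gI : Fin l → Euc d → ℝ) {h0 : Euc d → ℝ} {hI : Fin l → Euc d → ℝ}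
    {gE hE : Fin p → Euc d → ℝ} {y : Euc d}
    (V : SubgradTuple h0 hI gE hE y) (x : Euc d) : ℝ :=
  (∑ i, max (gI i x - hI i y - ⟪V.vI i, x - y⟫) 0)
  + ∑ j, max (gE j x - hE j y - ⟪V.vE j, x - y⟫)
      (hE j x - gE j y - ⟪V.wE j, x - y⟫)

/-- The convex majorant `Q_c(x, y, V)` of the penalty function. -/
def Qfun (g0 : Euc d → ℝ) (gI : Fin l → Euc d → ℝ) {h0 : Euc d → ℝ}
    {hI : Fin l → Euc d → ℝ} {gE hE : Fin p → Euc d → ℝ} {y : Euc d}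
    (V : SubgradTuple h0 hI gE hE y) (c : ℝ) (x : Euc d) : ℝ :=
  g0 x - ⟪V.v0, x - y⟫ + c * Gam gI V x

/-- The ℓ1 penalty term `φ`. -/
def phi (gI hI : Fin l → Euc d → ℝ) (gE hE : Fin p → Euc d → ℝ) (x : Euc d) : ℝ :=
  (∑ i, max (gI i x - hI i x) 0) + ∑ j, |gE j x - hE j x|

/-- The ℓ1 penalty function `Φ_c = f₀ + c φ`. -/
def Phi (g0 h0 : Euc d → ℝ) (gI hI : Fin l → Euc d → ℝ) (gE hE : Fin p → Euc d → ℝ)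
    (c : ℝ) (x : Euc d) : ℝ :=
  (g0 x - h0 x) + c * phi gI hI gE hE x

/-- Feasibility for the problem (P). -/
def Feasible (A : Set (Euc d)) (gI hI : Fin l → Euc d → ℝ)
    (gE hE : Fin p → Euc d → ℝ) (x : Euc d) : Prop :=
  x ∈ A ∧ (∀ i, gI i x - hI i x ≤ 0) ∧ (∀ j, gE j x - hE j x = 0)

/-- Criticality for the problem (P) (Definition 1). -/
def IsCritical (A : Set (Euc d)) (g0 h0 : Euc d → ℝ) (gI hI : Fin l → Euc d → ℝ)
    (gE hE : Fin p → Euc d → ℝ) (x : Euc d) : Prop :=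
  ∃ V : SubgradTuple h0 hI gE hE x, ∃ lam : Fin l → ℝ, ∃ mu1 mu2 : Fin p → ℝ,
    (∀ i, 0 ≤ lam i) ∧ (∀ j, 0 ≤ mu1 j) ∧ (∀ j, 0 ≤ mu2 j) ∧
    (∀ i, lam i * (gI i x - hI i x) = 0) ∧
    ∃ u0 ∈ subdiff g0 x, ∃ uI : Fin l → Euc d, (∀ i, uI i ∈ subdiff (gI i) x) ∧
    ∃ uE : Fin p → Euc d, (∀ j, uE j ∈ subdiff (gE j) x) ∧
    ∃ zE : Fin p → Euc d, (∀ j, zE j ∈ subdiff (hE j) x) ∧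
    ∃ ν ∈ normalCone A x,
      (0 : Euc d) = (u0 - V.v0) + (∑ i, lam i • (uI i - V.vI i))
        + (∑ j, mu1 j • (uE j - V.vE j)) - (∑ j, mu2 j • (V.wE j - zE j)) + ν

/-- Generalised criticality for the penalty parameter `c`. -/
def IsGenCritical (A : Set (Euc d)) (g0 h0 : Euc d → ℝ) (gI hI : Fin l → Euc d → ℝ)
    (gE hE : Fin p → Euc d → ℝ) (c : ℝ) (x : Euc d) : Prop :=
  x ∈ A ∧ ∃ V : SubgradTuple h0 hI gE hE x, ∀ z ∈ A, Qfun g0 gI V c x ≤ Qfun g0 gI V c z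

/-- Criticality for the penalty term `φ`. -/
def IsCriticalPen (A : Set (Euc d)) (h0 : Euc d → ℝ) (gI hI : Fin l → Euc d → ℝ)
    (gE hE : Fin p → Euc d → ℝ) (x : Euc d) : Prop :=
  x ∈ A ∧ ∃ V : SubgradTuple h0 hI gE hE x, ∀ z ∈ A, Gam gI V x ≤ Gam gI V z

/-- `F` is coercive on `A`. -/
def CoerciveOn {d : ℕ} (F : Euc d → ℝ) (A : Set (Euc d)) : Prop :=
  ∀ u : ℕ → Euc d, (∀ n, u n ∈ A) → Tendsto (fun n => ‖u n‖) atTop atTop →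
    Tendsto (fun n => F (u n)) atTop atTop

lemma phi_le_Gam {gI hI : Fin l → Euc d → ℝ} {h0 : Euc d → ℝ}
    {gE hE : Fin p → Euc d → ℝ} {y : Euc d}
    (V : SubgradTuple h0 hI gE hE y) (x : Euc d) :
    phi gI hI gE hE x ≤ Gam gI V x := by
  unfold phi Gam
  apply add_le_add
  · refine Finset.sum_le_sum fun i _ => max_le_max ?_ le_rfl
    have := V.vI_mem i x
    linarith
  · refine Finset.sum_le_sum fun j _ => ?_
    rw [abs_eq_max_neg, neg_sub]
    apply max_le_max
    · have := V.vE_mem j x; linarith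
    · have := V.wE_mem j x; linarith

lemma Gam_self {gI hI : Fin l → Euc d → ℝ} {h0 : Euc d → ℝ}
    {gE hE : Fin p → Euc d → ℝ} {y : Euc d}
    (V : SubgradTuple h0 hI gE hE y) :
    Gam gI V y = phi gI hI gE hE y := by
  unfold phi Gam
  congr 1
  · refine Finset.sum_congr rfl fun i _ => ?_
    simp
  · refine Finset.sum_congr rfl fun j _ => ?_
    rw [abs_eq_max_neg, neg_sub]
    simp

lemma Phi_le_Q {g0 h0 : Euc d → ℝ} {gI hI : Fin l → Euc d → ℝ}
    {gE hE : Fin p → Euc d → ℝ} {y : Euc d}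
    (V : SubgradTuple h0 hI gE hE y) {c : ℝ} (hc : 0 < c) (x : Euc d) :
    Phi g0 h0 gI hI gE hE c x ≤ Qfun g0 gI V c x - h0 y := by
  unfold Phi Qfun
  have h1 := V.v0_mem x
  have h2 : c * phi gI hI gE hE x ≤ c * Gam gI V x :=
    mul_le_mul_of_nonneg_left (phi_le_Gam V x) hc.le
  linarith

lemma Phi_eq_Q_self {g0 h0 : Euc d → ℝ} {gI hI : Fin l → Euc d → ℝ}
    {gE hE : Fin p → Euc d → ℝ} {y : Euc d}
    (V : SubgradTuple h0 hI gE hE y) (c : ℝ) :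
    Phi g0 h0 gI hI gE hE c y = Qfun g0 gI V c y - h0 y := by
  unfold Phi Qfun
  rw [Gam_self, sub_self, inner_zero_right]
  ring

theorem stmt13 {d l p : ℕ} (A : Set (Euc d)) (g0 h0 : Euc d → ℝ)
    (gI hI : Fin l → Euc d → ℝ) (gE hE : Fin p → Euc d → ℝ)
    (hA : Convex ℝ A) (hAcl : IsClosed A) (hAne : A.Nonempty)
    (hg0 : ConvexOn ℝ Set.univ g0) (hh0 : ConvexOn ℝ Set.univ h0)
    (hgI : ∀ i, ConvexOn ℝ Set.univ (gI i)) (hhI : ∀ i, ConvexOn ℝ Set.univ (hI i))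
    (hgE : ∀ j, ConvexOn ℝ Set.univ (gE j)) (hhE : ∀ j, ConvexOn ℝ Set.univ (hE j))
    (c : ℝ) (hc : 0 < c)
    (x : ℕ → Euc d) (hxA : ∀ n, x n ∈ A)
    (V : (n : ℕ) → SubgradTuple h0 hI gE hE (x n))
    (hmin : ∀ n, ∀ z ∈ A, Qfun g0 gI (V n) c (x (n + 1)) ≤ Qfun g0 gI (V n) c z)
    (hbd : ∃ M : ℝ, ∀ z ∈ A, M ≤ Phi g0 h0 gI hI gE hE c z) :
    (∀ n, Phi g0 h0 gI hI gE hE c (x (n + 1)) ≤ Phi g0 h0 gI hI gE hE c (x n)) ∧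
    Tendsto (fun n => |Phi g0 h0 gI hI gE hE c (x (n + 1)) - Phi g0 h0 gI hI gE hE c (x n)|)
      atTop (𝓝 0) := by
  set F : ℕ → ℝ := fun n => Phi g0 h0 gI hI gE hE c (x n) with hF
  have hmono : ∀ n, F (n + 1) ≤ F n := by
    intro n
    calc F (n + 1) ≤ Qfun g0 gI (V n) c (x (n + 1)) - h0 (x n) :=
          Phi_le_Q (V n) hc (x (n + 1))
      _ ≤ Qfun g0 gI (V n) c (x n) - h0 (x n) := by
          have := hmin n (x n) (hxA n); linarith
      _ = F n := (Phi_eq_Q_self (V n) c).symm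
  refine ⟨hmono, ?_⟩
  obtain ⟨M, hM⟩ := hbd
  have hant : Antitone F := antitone_nat_of_succ_le hmono
  have hbdd : BddBelow (Set.range F) := by
    refine ⟨M, fun r hr => ?_⟩
    obtain ⟨n, rfl⟩ := hr
    exact hM (x n) (hxA n)
  have hlim : Tendsto F atTop (𝓝 (⨅ n, F n)) := tendsto_atTop_ciInf hant hbdd
  have hlim' : Tendsto (fun n => F (n + 1)) atTop (𝓝 (⨅ n, F n)) :=
    hlim.comp (tendsto_add_atTop_nat 1)
  have hsub : Tendsto (fun n => F (n + 1) - F n) atTop (𝓝 0) := by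
    have := hlim'.sub hlim
    simpa using this
  simpa using hsub.abs
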